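/- Let λ, ω, κ be partitions with at most p parts, κ nonempty, and λ dominated by ω in the extended dominance order (partial sums of λ bounded by those of ω). For M ∈ ℕ, consider the interval I(M) = {σ : σ a partition with at most p parts, λ + Mκ ⊴' σ ⊴' ω + Mκ} where ⊴' is the extended dominance order on partitions of possibly different sizes. Then the map σ ↦ σ + κ is an injection from I(M) into I(M+1), and it is a bijection for all M ≥ L(λ,ω,κ,p), where L(λ,ω,κ,p) is defined as follows: for 1 ≤ k ≤ ℓ(κ) with κ_k > κ_{k+1}, set L_k = (2·Σ_{i<k} ω_i + ω_k + ω_{k+1} − 2·Σ_{i≤k} λ_i)/(κ_k − κ_{k+1}), and L_k = 0 if κ_k = κ_{k+1}; then L(λ,ω,κ,p) = max(L_1,...,L_{ℓ(κ)}) if p > ℓ(κ), and L(λ,ω,κ,p) = max(L_1,...,L_{ℓ(κ)−1}, (|ω|−|λ|−ω_{ℓ(κ)})/κ_{ℓ(κ)}) if p = ℓ(κ). -/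

import Mathlib

/-- A partition: a weakly decreasing sequence of naturals with finitely many nonzero parts.
`f i` is the `(i+1)`-st part. -/
def IsPartition (f : ℕ → ℕ) : Prop :=
  (∀ i j, i ≤ j → f j ≤ f i) ∧ ∃ N, ∀ i, N ≤ i → f i = 0

/-- The conjugate partition: `conjFn f j` is the number of parts of `f` that are `> j`,
i.e. the length of column `j+1` of the Young diagram of `f`. -/
noncomputable def conjFn (f : ℕ → ℕ) (j : ℕ) : ℕ :=
  Set.ncard {i : ℕ | j < f i}

/-- The number of nonzero parts of `f`. -/
noncomputable def lenFn (f : ℕ → ℕ) : ℕ :=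
  Set.ncard {i : ℕ | f i ≠ 0}

/-- The size `|f|`: the number of boxes of the Young diagram of `f`. -/
noncomputable def sizeFn (f : ℕ → ℕ) : ℕ :=
  Set.ncard {p : ℕ × ℕ | p.2 < f p.1}

/-- The (extended) dominance order on sequences: all partial sums of `f` are at most
those of `g`. -/
def Dom (f g : ℕ → ℕ) : Prop :=
  ∀ k : ℕ, ∑ i ∈ Finset.range k, f i ≤ ∑ i ∈ Finset.range k, g i

/-- The negative part `σ⁻ = (σ'_1, …, σ'_l)` of the `l`-decomposition of `σ`. -/
noncomputable def minusPart (l : ℕ) (f : ℕ → ℕ) : ℕ → ℕ :=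
  fun i => if i < l then conjFn f i else 0

/-- The positive part `σ⁺ = σ - (σ⁻)'` of the `l`-decomposition of `σ`. -/
noncomputable def plusPart (l : ℕ) (f : ℕ → ℕ) : ℕ → ℕ :=
  fun i => f i - conjFn (minusPart l f) i

/-- The concatenation `(σ⁻_1, …, σ⁻_l, σ⁺_1, σ⁺_2, …)`. -/
noncomputable def concatParts (l : ℕ) (f : ℕ → ℕ) : ℕ → ℕ :=
  fun i => if i < l then minusPart l f i else plusPart l f (i - l)

/-- The `l`-twisted dominance order. -/
def TwistedDom (l : ℕ) (f g : ℕ → ℕ) : Prop :=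
  Dom (concatParts l f) (concatParts l g)

/-- `λ + M·κ` componentwise. -/
def addScaled (f κ : ℕ → ℕ) (M : ℕ) : ℕ → ℕ := fun i => f i + M * κ i

/-- The interval `[lo, hi]` in the extended dominance order, cut to partitions with at
most `p` parts. -/
def IntervalSet (p : ℕ) (lo hi : ℕ → ℕ) : Set (ℕ → ℕ) :=
  {σ | IsPartition σ ∧ lenFn σ ≤ p ∧ Dom lo σ ∧ Dom σ hi}



lemma dc_eq_Iio (S : Set ℕ) (hfin : S.Finite)
    (hdc : ∀ i j, i ≤ j → j ∈ S → i ∈ S) : S = Set.Iio S.ncard := by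
  ext i
  simp only [Set.mem_Iio]
  constructor
  · intro hi
    have hsub : Set.Iic i ⊆ S := fun j hj => hdc j i hj hi
    have h1 := Set.ncard_le_ncard hsub hfin
    have h2 : (Set.Iic i).ncard = i + 1 := by
      rw [show Set.Iic i = ↑(Finset.range (i+1)) by ext; simp [Nat.lt_succ_iff],
        Set.ncard_coe_finset, Finset.card_range]
    omega
  · intro hi
    by_contra h
    have hsub : S ⊆ Set.Iio i := by
      intro j hj
      simp only [Set.mem_Iio]
      by_contra hj2
      exact h (hdc i j (le_of_not_gt hj2) hj)
    have h1 := Set.ncard_le_ncard hsub (Set.finite_Iio i)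
    have h2 : (Set.Iio i).ncard = i := by
      rw [show Set.Iio i = ↑(Finset.range i) by ext; simp,
        Set.ncard_coe_finset, Finset.card_range]
    omega

lemma partition_support (f : ℕ → ℕ) (hf : IsPartition f) :
    {i | f i ≠ 0} = Set.Iio (lenFn f) := by
  obtain ⟨hmono, N, hN⟩ := hf
  have hfin : {i | f i ≠ 0}.Finite := by
    apply Set.Finite.subset (Set.finite_Iio N)
    intro i hi
    simp only [Set.mem_Iio]
    by_contra h
    exact hi (hN i (le_of_not_gt h))
  exact dc_eq_Iio _ hfin (fun i j hij hj => by
    have := hmono i j hij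
    simp only [Set.mem_setOf_eq] at *
    omega)

lemma part_eq_zero (f : ℕ → ℕ) (hf : IsPartition f) {i : ℕ} (h : lenFn f ≤ i) : f i = 0 := by
  by_contra hne
  have h1 : i ∈ {j | f j ≠ 0} := hne
  rw [partition_support f hf] at h1
  simp only [Set.mem_Iio] at h1
  omega

lemma part_ne_zero (f : ℕ → ℕ) (hf : IsPartition f) {i : ℕ} (h : i < lenFn f) : f i ≠ 0 := by
  have h1 : i ∈ Set.Iio (lenFn f) := h
  rw [← partition_support f hf] at h1
  exact h1

lemma ncard_Iio_nat (n : ℕ) : (Set.Iio n : Set ℕ).ncard = n := by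
  rw [show (Set.Iio n : Set ℕ) = ↑(Finset.range n) by ext; simp,
    Set.ncard_coe_finset, Finset.card_range]

lemma sizeFn_eq_sum (f : ℕ → ℕ) (n : ℕ) (h : ∀ i, n ≤ i → f i = 0) :
    sizeFn f = ∑ i ∈ Finset.range n, f i := by
  have hset : {p : ℕ × ℕ | p.2 < f p.1} =
      ↑((Finset.range n).biUnion fun i => {i} ×ˢ Finset.range (f i)) := by
    ext ⟨a, b⟩
    simp only [Set.mem_setOf_eq, Finset.coe_biUnion, Set.mem_iUnion, Finset.mem_coe,
      Finset.mem_range, Finset.mem_product, Finset.mem_singleton]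
    constructor
    · intro hb
      have ha : a < n := by
        by_contra h2
        rw [h a (le_of_not_gt h2)] at hb
        omega
      exact ⟨a, ha, rfl, hb⟩
    · rintro ⟨i, hi, rfl, hb⟩
      exact hb
  rw [sizeFn, hset, Set.ncard_coe_finset, Finset.card_biUnion]
  · apply Finset.sum_congr rfl
    intro i _
    simp
  · intro i _ j _ hij
    simp only [Finset.disjoint_left, Finset.mem_product, Finset.mem_singleton]
    rintro ⟨a, b⟩ ⟨rfl, _⟩ ⟨h2, _⟩
    exact hij (by simpa using h2)

lemma sum_addScaled (f κ : ℕ → ℕ) (M n : ℕ) :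
    ∑ i ∈ Finset.range n, addScaled f κ M i
      = ∑ i ∈ Finset.range n, f i + M * ∑ i ∈ Finset.range n, κ i := by
  simp [addScaled, Finset.sum_add_distrib, Finset.mul_sum]

/-- Let `λ ⊴' ω` and `κ ≠ ∅` be partitions with at most `p` parts.  For
every `M` the map `σ ↦ σ + κ` is an injection from the interval
`[λ + Mκ, ω + Mκ]` (cut to partitions of length `≤ p`) into `[λ + (M+1)κ, ω + (M+1)κ]`,
and it is a bijection whenever `M ≥ L(λ,ω,κ,p)`, the bound from Definition 8.2 (here
expressed by clearing the positive denominators `κ_k - κ_{k+1}`, resp. `κ_{ℓ(κ)}`). -/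
theorem interval_stability (p : ℕ) (lam ω κ : ℕ → ℕ)
    (hlam : IsPartition lam) (hω : IsPartition ω) (hκ : IsPartition κ)
    (hlamp : lenFn lam ≤ p) (hωp : lenFn ω ≤ p) (hκp : lenFn κ ≤ p)
    (hκne : κ 0 ≠ 0) (hdom : Dom lam ω) :
    (∀ M : ℕ,
      Set.MapsTo (fun σ : ℕ → ℕ => fun i => σ i + κ i)
        (IntervalSet p (addScaled lam κ M) (addScaled ω κ M))
        (IntervalSet p (addScaled lam κ (M + 1)) (addScaled ω κ (M + 1))) ∧
      Set.InjOn (fun σ : ℕ → ℕ => fun i => σ i + κ i)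
        (IntervalSet p (addScaled lam κ M) (addScaled ω κ M))) ∧
    (∀ M : ℕ,
      (∀ k : ℕ, 1 ≤ k → k ≤ lenFn κ → (k < lenFn κ ∨ lenFn κ < p) → κ k < κ (k - 1) →
        2 * (∑ i ∈ Finset.range (k - 1), (ω i : ℤ)) + (ω (k - 1) : ℤ) + (ω k : ℤ)
            - 2 * (∑ i ∈ Finset.range k, (lam i : ℤ))
          ≤ (M : ℤ) * ((κ (k - 1) : ℤ) - (κ k : ℤ))) →
      (p = lenFn κ →
        (sizeFn ω : ℤ) - (sizeFn lam : ℤ) - (ω (lenFn κ - 1) : ℤ)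
          ≤ (M : ℤ) * (κ (lenFn κ - 1) : ℤ)) →
      Set.BijOn (fun σ : ℕ → ℕ => fun i => σ i + κ i)
        (IntervalSet p (addScaled lam κ M) (addScaled ω κ M))
        (IntervalSet p (addScaled lam κ (M + 1)) (addScaled ω κ (M + 1)))) := by
  have hl1 : 1 ≤ lenFn κ := by
    by_contra h
    exact hκne (part_eq_zero κ hκ (by omega))
  have hκ0 : ∀ i, lenFn κ ≤ i → κ i = 0 := fun i hi => part_eq_zero κ hκ hi
  -- MapsTo for every M
  have hmaps : ∀ M : ℕ,
      Set.MapsTo (fun σ : ℕ → ℕ => fun i => σ i + κ i)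
        (IntervalSet p (addScaled lam κ M) (addScaled ω κ M))
        (IntervalSet p (addScaled lam κ (M + 1)) (addScaled ω κ (M + 1))) := by
    intro M σ hσ
    obtain ⟨hσpart, hσlen, hσlo, hσhi⟩ := hσ
    refine ⟨⟨?_, ?_⟩, ?_, ?_, ?_⟩
    · intro i j hij
      exact add_le_add (hσpart.1 i j hij) (hκ.1 i j hij)
    · obtain ⟨N1, hN1⟩ := hσpart.2
      obtain ⟨N2, hN2⟩ := hκ.2
      refine ⟨max N1 N2, fun i hi => ?_⟩
      show σ i + κ i = 0
      rw [hN1 i (le_trans (le_max_left _ _) hi), hN2 i (le_trans (le_max_right _ _) hi)]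
    · have hsupp : {i | σ i + κ i ≠ 0} = Set.Iio (max (lenFn σ) (lenFn κ)) := by
        have : {i | σ i + κ i ≠ 0} = {i | σ i ≠ 0} ∪ {i | κ i ≠ 0} := by
          ext i; simp only [Set.mem_setOf_eq, Set.mem_union]; omega
        rw [this, partition_support σ hσpart, partition_support κ hκ]
        ext i; simp only [Set.mem_union, Set.mem_Iio, lt_max_iff]
      have : lenFn (fun i => σ i + κ i) = max (lenFn σ) (lenFn κ) := by
        rw [lenFn, hsupp, ncard_Iio_nat]
      rw [this]
      exact max_le hσlen hκp
    · intro n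
      have h1 := hσlo n
      rw [sum_addScaled] at h1 ⊢
      have h2 : ∑ i ∈ Finset.range n, (σ i + κ i) =
          ∑ i ∈ Finset.range n, σ i + ∑ i ∈ Finset.range n, κ i :=
        Finset.sum_add_distrib
      have h3 : (M + 1) * ∑ i ∈ Finset.range n, κ i
          = M * ∑ i ∈ Finset.range n, κ i + ∑ i ∈ Finset.range n, κ i := by ring
      rw [h2, h3]
      omega
    · intro n
      have h1 := hσhi n
      rw [sum_addScaled] at h1 ⊢
      have h2 : ∑ i ∈ Finset.range n, (σ i + κ i) =
          ∑ i ∈ Finset.range n, σ i + ∑ i ∈ Finset.range n, κ i :=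
        Finset.sum_add_distrib
      have h3 : (M + 1) * ∑ i ∈ Finset.range n, κ i
          = M * ∑ i ∈ Finset.range n, κ i + ∑ i ∈ Finset.range n, κ i := by ring
      rw [h2, h3]
      omega
  have hinj : ∀ M : ℕ,
      Set.InjOn (fun σ : ℕ → ℕ => fun i => σ i + κ i)
        (IntervalSet p (addScaled lam κ M) (addScaled ω κ M)) := by
    intro M a _ b _ h
    funext i
    have := congrFun h i
    simp only at this
    omega
  refine ⟨fun M => ⟨hmaps M, hinj M⟩, ?_⟩
  intro M hkcond hszcond
  refine ⟨hmaps M, hinj M, ?_⟩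
  -- Surjectivity
  intro τ hτ
  obtain ⟨hτpart, hτlen, hτlo, hτhi⟩ := hτ
  -- Claim A: adjacent differences
  have claimA : ∀ k, k < lenFn κ → τ (k+1) + κ k ≤ τ k + κ (k+1) := by
    intro k hkl
    by_cases hcase : k + 1 < lenFn κ ∨ lenFn κ < p
    · by_cases heq : κ k = κ (k+1)
      · rw [heq]
        exact Nat.add_le_add_right (hτpart.1 k (k+1) (by omega)) _
      · have hlt : κ (k+1) < κ k := lt_of_le_of_ne (hκ.1 k (k+1) (by omega)) (Ne.symm heq)
        have H := hkcond (k+1) (by omega) (by omega) hcase (by simpa using hlt)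
        simp only [Nat.add_sub_cancel] at H
        have A1 := hτhi k
        have A2 := hτlo (k+1)
        have A3 := hτhi (k+1+1)
        rw [sum_addScaled] at A1 A2 A3
        simp only [Finset.sum_range_succ] at A2 A3 H
        zify at A1 A2 A3 ⊢
        linarith
    · -- k+1 = lenFn κ and p = lenFn κ
      push_neg at hcase
      have hk1 : k + 1 = lenFn κ := by omega
      have hpl : p = lenFn κ := by omega
      have hτk1 : τ (k+1) = 0 := part_eq_zero τ hτpart (by omega)
      have hκk1 : κ (k+1) = 0 := hκ0 (k+1) (by omega)
      have Hs := hszcond hpl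
      rw [sizeFn_eq_sum ω (k+1) (fun i hi => part_eq_zero ω hω (by omega)),
          sizeFn_eq_sum lam (k+1) (fun i hi => part_eq_zero lam hlam (by omega))] at Hs
      have hk' : lenFn κ - 1 = k := by omega
      rw [hk'] at Hs
      have B1 := hτlo (k+1)
      have B2 := hτhi k
      rw [sum_addScaled] at B1 B2
      simp only [Finset.sum_range_succ] at B1 Hs
      rw [hτk1, hκk1]
      zify at B1 B2 ⊢
      push_cast at Hs
      linarith
  -- κ i ≤ τ i
  have hgeAux : ∀ m i, lenFn κ ≤ i + m → κ i ≤ τ i := by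
    intro m
    induction m with
    | zero =>
      intro i hi
      rw [hκ0 i (by omega)]
      exact Nat.zero_le _
    | succ m ih =>
      intro i hi
      by_cases h : lenFn κ ≤ i + m
      · exact ih i h
      · have hkl : i < lenFn κ := by omega
        have h1 := claimA i hkl
        have h2 := ih (i+1) (by omega)
        omega
  have hge : ∀ i, κ i ≤ τ i := fun i => hgeAux (lenFn κ) i (by omega)
  -- the preimage
  refine ⟨fun i => τ i - κ i, ⟨⟨?_, ?_⟩, ?_, ?_, ?_⟩, ?_⟩
  · -- monotone
    have hadj : ∀ k, τ (k+1) - κ (k+1) ≤ τ k - κ k := by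
      intro k
      by_cases h : k < lenFn κ
      · have h1 := claimA k h
        have h2 := hge k
        have h3 := hge (k+1)
        omega
      · have h1 : κ k = 0 := hκ0 k (by omega)
        have h2 : κ (k+1) = 0 := hκ0 (k+1) (by omega)
        have h3 := hτpart.1 k (k+1) (by omega)
        omega
    intro i j hij
    exact antitone_nat_of_succ_le (f := fun n => τ n - κ n) hadj hij
  · obtain ⟨N, hN⟩ := hτpart.2
    refine ⟨N, fun i hi => ?_⟩
    show τ i - κ i = 0
    rw [hN i hi]
    omega
  · -- length
    have hsub : {i | τ i - κ i ≠ 0} ⊆ {i | τ i ≠ 0} := by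
      intro i hi
      simp only [Set.mem_setOf_eq] at *
      omega
    have hfin : {i | τ i ≠ 0}.Finite := by
      rw [partition_support τ hτpart]
      exact Set.finite_Iio _
    calc lenFn (fun i => τ i - κ i) ≤ lenFn τ := Set.ncard_le_ncard hsub hfin
      _ ≤ p := hτlen
  · -- Dom lower
    intro n
    show ∑ i ∈ Finset.range n, addScaled lam κ M i ≤ ∑ i ∈ Finset.range n, (τ i - κ i)
    have h1 := hτlo n
    rw [sum_addScaled] at h1 ⊢
    have h2 : ∑ i ∈ Finset.range n, (τ i - κ i) + ∑ i ∈ Finset.range n, κ i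
        = ∑ i ∈ Finset.range n, τ i := by
      rw [← Finset.sum_add_distrib]
      exact Finset.sum_congr rfl (fun i _ => Nat.sub_add_cancel (hge i))
    have h3 : (M + 1) * ∑ i ∈ Finset.range n, κ i
        = M * ∑ i ∈ Finset.range n, κ i + ∑ i ∈ Finset.range n, κ i := by ring
    omega
  · -- Dom upper
    intro n
    show ∑ i ∈ Finset.range n, (τ i - κ i) ≤ ∑ i ∈ Finset.range n, addScaled ω κ M i
    have h1 := hτhi n
    rw [sum_addScaled] at h1 ⊢
    have h2 : ∑ i ∈ Finset.range n, (τ i - κ i) + ∑ i ∈ Finset.range n, κ i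
        = ∑ i ∈ Finset.range n, τ i := by
      rw [← Finset.sum_add_distrib]
      exact Finset.sum_congr rfl (fun i _ => Nat.sub_add_cancel (hge i))
    have h3 : (M + 1) * ∑ i ∈ Finset.range n, κ i
        = M * ∑ i ∈ Finset.range n, κ i + ∑ i ∈ Finset.range n, κ i := by ring
    omega
  · funext i
    exact Nat.sub_add_cancel (hge i)
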